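/- arXiv:1901.06148 — 4 statements merged into one kernel-verified Lean document; each statement's English description precedes it below -/
import Mathlib

section
/- Let (Ω,F,P) be a probability space, let G ⊆ F be a sub-σ-algebra, let E be a complete separable normed real vector space, and let q ∈ [1,∞). Let Y : Ω → E be Bochner integrable, let X̂ : Ω → E be a strongly measurable map, and let M := E[Y | G] denote the conditional expectation of Y given G. Assume that the E-valued random variables Y − X̂ and 2M − Y − X̂ are identically distributed. Then (E[‖Y − X̂‖_E^q])^{1/q} ≥ (E[‖Y − M‖_E^q])^{1/q}. -/
open MeasureTheory ProbabilityTheory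
open scoped ENNReal NNReal

/-- Symmetrization step: if `Y − X̂` and `2·E[Y|G] − Y − X̂` are identically distributed,
then the conditional expectation `E[Y|G]` is at least as good a reconstruction of `Y` as
`X̂` in the `q`-th mean sense (inequality interpreted in `[0,∞]`). -/
theorem condexp_optimal_reconstruction
    {Ω : Type*} {mF : MeasurableSpace Ω} (P : Measure Ω) [IsProbabilityMeasure P]
    (G : MeasurableSpace Ω) (hG : G ≤ mF)
    {E : Type*} [NormedAddCommGroup E] [NormedSpace ℝ E] [CompleteSpace E]
    [TopologicalSpace.SeparableSpace E] [MeasurableSpace E] [BorelSpace E]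
    (q : ℝ) (hq : 1 ≤ q)
    (Y Xhat : Ω → E) (hY : Integrable Y P) (hXhat : StronglyMeasurable[mF] Xhat)
    (hid : @ProbabilityTheory.IdentDistrib Ω Ω E mF mF _
      (fun ω => Y ω - Xhat ω)
      (fun ω => (2 : ℝ) • (P[Y|G]) ω - Y ω - Xhat ω) P P) :
    eLpNorm (fun ω => Y ω - (P[Y|G]) ω) (ENNReal.ofReal q) P ≤
      eLpNorm (fun ω => Y ω - Xhat ω) (ENNReal.ofReal q) P := by
  set M : Ω → E := P[Y|G] with hM
  set p : ℝ≥0∞ := ENNReal.ofReal q with hp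
  have hp1 : (1 : ℝ≥0∞) ≤ p := by
    rw [hp, ← ENNReal.ofReal_one]; exact ENNReal.ofReal_le_ofReal hq
  have hYm : AEStronglyMeasurable[mF] Y P := hY.1
  have hXm : AEStronglyMeasurable[mF] Xhat P := hXhat.aestronglyMeasurable
  have hMsm : AEStronglyMeasurable[mF] M P :=
    (stronglyMeasurable_condExp.mono hG).aestronglyMeasurable
  have hA : AEStronglyMeasurable[mF] (fun ω => Y ω - Xhat ω) P := hYm.sub hXm
  have hB : AEStronglyMeasurable[mF] (fun ω => (2 : ℝ) • M ω - Y ω - Xhat ω) P :=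
    ((hMsm.const_smul (2 : ℝ)).sub hYm).sub hXm
  have heq : (fun ω => Y ω - M ω)
      = (2⁻¹ : ℝ) • (fun ω => (Y ω - Xhat ω) - ((2 : ℝ) • M ω - Y ω - Xhat ω)) := by
    funext ω
    show Y ω - M ω = (2⁻¹ : ℝ) • ((Y ω - Xhat ω) - ((2 : ℝ) • M ω - Y ω - Xhat ω))
    module
  have hnorm : eLpNorm (fun ω => (2 : ℝ) • M ω - Y ω - Xhat ω) p P
      = eLpNorm (fun ω => Y ω - Xhat ω) p P := @ProbabilityTheory.IdentDistrib.eLpNorm_eq Ω Ω E mF mF _ P P _ _ _ _ hid p |>.symm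
  calc eLpNorm (fun ω => Y ω - M ω) p P
      = ‖(2⁻¹ : ℝ)‖₊ • eLpNorm
          (fun ω => (Y ω - Xhat ω) - ((2 : ℝ) • M ω - Y ω - Xhat ω)) p P := by
        rw [heq, eLpNorm_const_smul]; rfl
    _ ≤ ‖(2⁻¹ : ℝ)‖₊ • (eLpNorm (fun ω => Y ω - Xhat ω) p P
          + eLpNorm (fun ω => (2 : ℝ) • M ω - Y ω - Xhat ω) p P) := by
        gcongr
        exact eLpNorm_sub_le hA hB hp1
    _ = eLpNorm (fun ω => Y ω - Xhat ω) p P := by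
        rw [hnorm, ← two_mul, ENNReal.smul_def, smul_eq_mul, ← mul_assoc]
        norm_num [ENNReal.inv_mul_cancel]
end

section
/- Let T ∈ (0,∞), d, m, N ∈ ℕ, r ∈ [0,∞), θ ∈ [1,∞), K ∈ (0,∞), and let σ : [0,T] × ℝ^d → ℝ^{d×m} be a measurable function such that for all t ∈ [0,T] and x ∈ ℝ^d it holds that |σ(t,x)| ≤ K · (1 + |x|^{(r+2)/2}). Let (Ω,F,P) be a probability space and let Y : Ω → C([0,T];ℝ^d) be a measurable map into the space of continuous ℝ^d-valued functions on [0,T]. Then ‖ sup_{t∈[0,T]} | σ(t, Y(t)) − σ(t, Y(t)) / (1 + (T/N)^{1/2} · |Y(t)|^r) | ‖_{L_θ} ≤ (T/N)^{1/2} · K · ( ‖ sup_{t∈[0,T]} |Y(t)|^{r} ‖_{L_θ} + ‖ sup_{t∈[0,T]} |Y(t)|^{(3r+2)/2} ‖_{L_θ} ), where the inequality is interpreted in [0,∞]. -/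
open MeasureTheory

/-- Sup of a continuous bounded function equals sup over a dense set. -/
lemma ciSup_dense_eq {X : Type*} [TopologicalSpace X] [Nonempty X] {D : Set X}
    (hD : Dense D) {f : X → ℝ} (hf : Continuous f) (hb : BddAbove (Set.range f)) :
    (⨆ x, f x) = ⨆ x : D, f x := by
  have hDne : D.Nonempty := hD.nonempty
  haveI : Nonempty D := hDne.to_subtype
  have hbD : BddAbove (Set.range fun d : D => f d) :=
    hb.mono (Set.range_comp_subset_range _ f)
  refine le_antisymm ?_ (ciSup_le fun d => le_ciSup hb d)
  refine ciSup_le fun x => ?_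
  have hx : f x ∈ closure (f '' D) := by
    have : x ∈ closure D := hD x
    exact (Set.mapsTo_image f D).closure hf this
  have hcl : closure (f '' D) ⊆ Set.Iic (⨆ d : D, f d) := by
    apply closure_minimal _ isClosed_Iic
    rintro y ⟨d, hd, rfl⟩
    exact le_ciSup hbD ⟨d, hd⟩
  exact hcl hx

/-- Estimate for the sup distance between a diffusion coefficient of polynomial growth
and its tamed version along a path-valued random variable:
`‖sup_t |σ(t,Y(t)) − σ(t,Y(t))/(1+(T/N)^{1/2}|Y(t)|^r)|‖_{L_θ}
  ≤ (T/N)^{1/2} · K · (‖sup_t |Y(t)|^r‖_{L_θ} + ‖sup_t |Y(t)|^{(3r+2)/2}‖_{L_θ})`,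
interpreted in `[0,∞]`. -/
theorem sup_dist_tamed_sigma_Lp_bound
    (T : ℝ) (hT : 0 < T) (d m N : ℕ) (hd : 0 < d) (hm : 0 < m) (hN : 0 < N)
    (r θ K : ℝ) (hr : 0 ≤ r) (hθ : 1 ≤ θ) (hK : 0 < K)
    (σ : ℝ → EuclideanSpace ℝ (Fin d) → EuclideanSpace ℝ (Fin d × Fin m))
    (hσmeas : Measurable fun p : ℝ × EuclideanSpace ℝ (Fin d) => σ p.1 p.2)
    (hσ : ∀ t ∈ Set.Icc (0 : ℝ) T, ∀ x, ‖σ t x‖ ≤ K * (1 + ‖x‖ ^ ((r + 2) / 2)))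
    {Ω : Type*} [MeasurableSpace Ω] (P : Measure Ω) [IsProbabilityMeasure P]
    (Y : Ω → ℝ → EuclideanSpace ℝ (Fin d))
    (hYcont : ∀ ω, ContinuousOn (Y ω) (Set.Icc 0 T))
    (hYmeas : ∀ t ∈ Set.Icc (0 : ℝ) T, Measurable fun ω => Y ω t) :
    eLpNorm (fun ω => ⨆ t : Set.Icc (0 : ℝ) T,
        ‖σ ↑t (Y ω ↑t) - (1 + Real.sqrt (T / N) * ‖Y ω ↑t‖ ^ r)⁻¹ • σ ↑t (Y ω ↑t)‖)
        (ENNReal.ofReal θ) P ≤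
      ENNReal.ofReal (Real.sqrt (T / N) * K) *
        (eLpNorm (fun ω => ⨆ t : Set.Icc (0 : ℝ) T, ‖Y ω ↑t‖ ^ r) (ENNReal.ofReal θ) P +
          eLpNorm (fun ω => ⨆ t : Set.Icc (0 : ℝ) T, ‖Y ω ↑t‖ ^ ((3 * r + 2) / 2))
            (ENNReal.ofReal θ) P) := by
  haveI : Nonempty (Set.Icc (0 : ℝ) T) := ⟨⟨0, Set.left_mem_Icc.2 hT.le⟩⟩
  set c : ℝ := Real.sqrt (T / N) with hc
  have hc0 : 0 ≤ c := Real.sqrt_nonneg _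
  set s2 : ℝ := (3 * r + 2) / 2 with hs2
  have hs2eq : r + (r + 2) / 2 = s2 := by rw [hs2]; ring
  have hs2pos : (0:ℝ) < s2 := by positivity
  -- continuity of the norm of the path, restricted to Icc
  have hucont : ∀ ω, Continuous fun t : Set.Icc (0 : ℝ) T => ‖Y ω ↑t‖ :=
    fun ω => ((hYcont ω).restrict).norm
  have hbdd : ∀ ω (p : ℝ), 0 ≤ p →
      BddAbove (Set.range fun t : Set.Icc (0 : ℝ) T => ‖Y ω ↑t‖ ^ p) := by
    intro ω p hp
    have hcont : Continuous fun t : Set.Icc (0 : ℝ) T => ‖Y ω ↑t‖ ^ p :=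
      (Real.continuous_rpow_const hp).comp (hucont ω)
    exact (isCompact_range hcont).bddAbove
  -- define the two dominating functions
  set g : Ω → ℝ := fun ω => ⨆ t : Set.Icc (0 : ℝ) T, ‖Y ω ↑t‖ ^ r with hg
  set h : Ω → ℝ := fun ω => ⨆ t : Set.Icc (0 : ℝ) T, ‖Y ω ↑t‖ ^ s2 with hh
  -- pointwise bound
  have hpt : ∀ ω, (⨆ t : Set.Icc (0 : ℝ) T,
      ‖σ ↑t (Y ω ↑t) - (1 + c * ‖Y ω ↑t‖ ^ r)⁻¹ • σ ↑t (Y ω ↑t)‖)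
      ≤ c * K * (g ω + h ω) := by
    intro ω
    refine ciSup_le fun t => ?_
    set x := Y ω ↑t with hx
    set a : ℝ := c * ‖x‖ ^ r with ha
    have ha0 : 0 ≤ a := by positivity
    have h1a : (0:ℝ) < 1 + a := by linarith
    have key : ‖σ ↑t x - (1 + a)⁻¹ • σ ↑t x‖ = (1 - (1 + a)⁻¹) * ‖σ ↑t x‖ := by
      have : σ ↑t x - (1 + a)⁻¹ • σ ↑t x = (1 - (1 + a)⁻¹) • σ ↑t x := by
        rw [sub_smul, one_smul]
      rw [this, norm_smul, Real.norm_eq_abs, abs_of_nonneg]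
      have : (1 + a)⁻¹ ≤ 1 := by
        rw [inv_le_one_iff₀]; right; linarith
      linarith
    rw [key]
    have hinv1 : (1 + a)⁻¹ ≤ 1 := by rw [inv_le_one_iff₀]; right; linarith
    have hfac : 1 - (1 + a)⁻¹ ≤ a := by
      have he : 1 - (1 + a)⁻¹ = a * (1 + a)⁻¹ := by field_simp; ring
      rw [he]
      calc a * (1 + a)⁻¹ ≤ a * 1 := mul_le_mul_of_nonneg_left hinv1 ha0
        _ = a := mul_one a
    have hσb := hσ ↑t t.2 x
    have hσ0 : 0 ≤ ‖σ ↑t x‖ := norm_nonneg _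
    have hfac0 : 0 ≤ 1 - (1 + a)⁻¹ := by
      have : (1 + a)⁻¹ ≤ 1 := by rw [inv_le_one_iff₀]; right; linarith
      linarith
    have step1 : (1 - (1 + a)⁻¹) * ‖σ ↑t x‖ ≤ a * (K * (1 + ‖x‖ ^ ((r + 2) / 2))) :=
      mul_le_mul hfac hσb hσ0 ha0
    have step2 : a * (K * (1 + ‖x‖ ^ ((r + 2) / 2)))
        = c * K * (‖x‖ ^ r + ‖x‖ ^ s2) := by
      rw [ha, ← hs2eq, Real.rpow_add' (norm_nonneg x) (by rw [hs2eq]; exact hs2pos.ne')]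
      ring
    have hgle : ‖x‖ ^ r ≤ g ω := le_ciSup (hbdd ω r hr) t
    have hhle : ‖x‖ ^ s2 ≤ h ω := le_ciSup (hbdd ω s2 hs2pos.le) t
    have step3 : c * K * (‖x‖ ^ r + ‖x‖ ^ s2) ≤ c * K * (g ω + h ω) := by
      apply mul_le_mul_of_nonneg_left (by linarith) (by positivity)
    linarith [step1, step2 ▸ step1]
  -- measurability of g and h via a countable dense subset of the time interval
  obtain ⟨D, hDcount, hDdense⟩ :=
    TopologicalSpace.exists_countable_dense (Set.Icc (0 : ℝ) T)
  haveI : Countable D := hDcount.to_subtype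
  have hmeas_sup : ∀ (p : ℝ), 0 ≤ p →
      Measurable fun ω => ⨆ t : Set.Icc (0 : ℝ) T, ‖Y ω ↑t‖ ^ p := by
    intro p hp
    have heq : (fun ω => ⨆ t : Set.Icc (0 : ℝ) T, ‖Y ω ↑t‖ ^ p)
        = fun ω => ⨆ t : D, ‖Y ω ↑(t : Set.Icc (0:ℝ) T)‖ ^ p := by
      funext ω
      apply ciSup_dense_eq hDdense
      · exact (Real.continuous_rpow_const hp).comp (hucont ω)
      · exact hbdd ω p hp
    rw [heq]
    exact Measurable.iSup fun t =>
      (Real.continuous_rpow_const hp).measurable.comp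
        (hYmeas ↑(t : Set.Icc (0:ℝ) T) (t : Set.Icc (0:ℝ) T).2).norm
  have hgmeas : Measurable g := hmeas_sup r hr
  have hhmeas : Measurable h := hmeas_sup s2 hs2pos.le
  -- put together
  have h1 : eLpNorm (fun ω => ⨆ t : Set.Icc (0 : ℝ) T,
      ‖σ ↑t (Y ω ↑t) - (1 + c * ‖Y ω ↑t‖ ^ r)⁻¹ • σ ↑t (Y ω ↑t)‖) (ENNReal.ofReal θ) P
      ≤ eLpNorm (fun ω => (c * K) * (g ω + h ω)) (ENNReal.ofReal θ) P := by
    apply eLpNorm_mono_real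
    intro ω
    rw [Real.norm_eq_abs, abs_of_nonneg (Real.iSup_nonneg fun t => norm_nonneg _)]
    exact hpt ω
  have h2 : eLpNorm (fun ω => (c * K) * (g ω + h ω)) (ENNReal.ofReal θ) P
      = ENNReal.ofReal (c * K) * eLpNorm (fun ω => g ω + h ω) (ENNReal.ofReal θ) P := by
    rw [show (fun ω => (c * K) * (g ω + h ω)) = (c * K) • (fun ω => g ω + h ω) from rfl,
      eLpNorm_const_smul, Real.enorm_eq_ofReal (by positivity)]
  have h3 : eLpNorm (fun ω => g ω + h ω) (ENNReal.ofReal θ) P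
      ≤ eLpNorm g (ENNReal.ofReal θ) P + eLpNorm h (ENNReal.ofReal θ) P := by
    exact eLpNorm_add_le hgmeas.aestronglyMeasurable hhmeas.aestronglyMeasurable
      (ENNReal.one_le_ofReal.2 hθ)
  calc eLpNorm (fun ω => ⨆ t : Set.Icc (0 : ℝ) T,
      ‖σ ↑t (Y ω ↑t) - (1 + c * ‖Y ω ↑t‖ ^ r)⁻¹ • σ ↑t (Y ω ↑t)‖) (ENNReal.ofReal θ) P
      ≤ ENNReal.ofReal (c * K) * eLpNorm (fun ω => g ω + h ω) (ENNReal.ofReal θ) P := by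
        rw [← h2]; exact h1
    _ ≤ ENNReal.ofReal (c * K) *
        (eLpNorm g (ENNReal.ofReal θ) P + eLpNorm h (ENNReal.ofReal θ) P) :=
        mul_le_mul_right h3 _
end

section
/- Let T ∈ (0,∞), d, m ∈ ℕ, a ∈ (1,∞), r ∈ [0,∞), and let μ : [0,T] × ℝ^d → ℝ^d and σ : [0,T] × ℝ^d → ℝ^{d×m} be functions. Assume there exists C₁ ∈ (0,∞) such that for all t ∈ [0,T] and all x, y ∈ ℝ^d it holds that 2·(x − y)^⊤·(μ(t,x) − μ(t,y)) + (a − 1)·|σ(t,x) − σ(t,y)|² ≤ C₁·|x − y|², and assume there exists C₂ ∈ (0,∞) such that for all t ∈ [0,T] and all x, y ∈ ℝ^d it holds that |μ(t,x) − μ(t,y)| ≤ C₂·|x − y|·(1 + |x|^r + |y|^r). Then there exists C ∈ (0,∞) such that for all t ∈ [0,T] and all x, y ∈ ℝ^d it holds that |σ(t,x) − σ(t,y)| ≤ C·|x − y|·(1 + |x|^{r/2} + |y|^{r/2}). -/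
open scoped RealInnerProductSpace

/-- The monotonicity condition (M_a) together with Assumption (pL_r^μ) implies
Assumption (pL_{r/2}^σ): the diffusion coefficient is Lipschitz in the state variable
with a Lipschitz bound growing like `1 + |x|^{r/2} + |y|^{r/2}`. -/
theorem sigma_polyLipschitz_of_monotonicity_and_mu_polyLipschitz
    (T : ℝ) (hT : 0 < T) (d m : ℕ) (hd : 0 < d) (hm : 0 < m)
    (a : ℝ) (ha : 1 < a) (r : ℝ) (hr : 0 ≤ r)
    (μ : ℝ → EuclideanSpace ℝ (Fin d) → EuclideanSpace ℝ (Fin d))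
    (σ : ℝ → EuclideanSpace ℝ (Fin d) → EuclideanSpace ℝ (Fin d × Fin m))
    (C₁ : ℝ) (hC₁ : 0 < C₁)
    (h1 : ∀ t ∈ Set.Icc (0 : ℝ) T, ∀ x y,
      2 * ⟪x - y, μ t x - μ t y⟫ + (a - 1) * ‖σ t x - σ t y‖ ^ 2 ≤ C₁ * ‖x - y‖ ^ 2)
    (C₂ : ℝ) (hC₂ : 0 < C₂)
    (h2 : ∀ t ∈ Set.Icc (0 : ℝ) T, ∀ x y,
      ‖μ t x - μ t y‖ ≤ C₂ * ‖x - y‖ * (1 + ‖x‖ ^ r + ‖y‖ ^ r)) :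
    ∃ C : ℝ, 0 < C ∧ ∀ t ∈ Set.Icc (0 : ℝ) T, ∀ x y,
      ‖σ t x - σ t y‖ ≤ C * ‖x - y‖ * (1 + ‖x‖ ^ (r / 2) + ‖y‖ ^ (r / 2)) := by
  have ha' : 0 < a - 1 := by linarith
  set K : ℝ := (C₁ + 2 * C₂) / (a - 1) with hK
  have hKpos : 0 < K := by positivity
  refine ⟨Real.sqrt K, Real.sqrt_pos.mpr hKpos, ?_⟩
  intro t ht x y
  have hμ := h2 t ht x y
  have hmon := h1 t ht x y
  -- Cauchy–Schwarz
  have hcs : -(‖x - y‖ * ‖μ t x - μ t y‖) ≤ ⟪x - y, μ t x - μ t y⟫ :=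
    neg_le_of_abs_le (abs_real_inner_le_norm _ _)
  set X : ℝ := ‖x‖ ^ (r / 2) with hX
  set Y : ℝ := ‖y‖ ^ (r / 2) with hY
  have hXnn : 0 ≤ X := Real.rpow_nonneg (norm_nonneg _) _
  have hYnn : 0 ≤ Y := Real.rpow_nonneg (norm_nonneg _) _
  have hX2 : X ^ 2 = ‖x‖ ^ r := by
    rw [hX, ← Real.rpow_natCast (‖x‖ ^ (r/2)) 2, ← Real.rpow_mul (norm_nonneg _)]
    norm_num
  have hY2 : Y ^ 2 = ‖y‖ ^ r := by
    rw [hY, ← Real.rpow_natCast (‖y‖ ^ (r/2)) 2, ← Real.rpow_mul (norm_nonneg _)]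
    norm_num
  have hpoly : 1 + ‖x‖ ^ r + ‖y‖ ^ r ≤ (1 + X + Y) ^ 2 := by nlinarith
  have hsq : ‖σ t x - σ t y‖ ^ 2 ≤ (Real.sqrt K * ‖x - y‖ * (1 + X + Y)) ^ 2 := by
    have hCsq : Real.sqrt K ^ 2 = K := Real.sq_sqrt hKpos.le
    have hxy : 0 ≤ ‖x - y‖ := norm_nonneg _
    have key : (a - 1) * ‖σ t x - σ t y‖ ^ 2
        ≤ (C₁ + 2 * C₂) * ‖x - y‖ ^ 2 * (1 + ‖x‖ ^ r + ‖y‖ ^ r) := by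
      nlinarith [mul_le_mul_of_nonneg_left hμ (mul_nonneg (by norm_num : (0:ℝ) ≤ 2) hxy),
        mul_nonneg (mul_nonneg hC₁.le (sq_nonneg ‖x - y‖))
          (add_nonneg (Real.rpow_nonneg (norm_nonneg x) r)
            (Real.rpow_nonneg (norm_nonneg y) r))]
    have hstep := mul_le_mul_of_nonneg_left hpoly
      (mul_nonneg hKpos.le (sq_nonneg ‖x - y‖))
    calc ‖σ t x - σ t y‖ ^ 2 ≤ K * ‖x - y‖ ^ 2 * (1 + ‖x‖ ^ r + ‖y‖ ^ r) := by
          rw [hK, div_mul_eq_mul_div, div_mul_eq_mul_div, le_div_iff₀ ha']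
          linarith [key]
      _ ≤ K * ‖x - y‖ ^ 2 * (1 + X + Y) ^ 2 := hstep
      _ = (Real.sqrt K * ‖x - y‖ * (1 + X + Y)) ^ 2 := by rw [mul_pow, mul_pow, hCsq]
  have hrhs : 0 ≤ Real.sqrt K * ‖x - y‖ * (1 + X + Y) := by positivity
  calc ‖σ t x - σ t y‖ = Real.sqrt (‖σ t x - σ t y‖ ^ 2) :=
        (Real.sqrt_sq (norm_nonneg _)).symm
    _ ≤ Real.sqrt ((Real.sqrt K * ‖x - y‖ * (1 + X + Y)) ^ 2) := Real.sqrt_le_sqrt hsq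
    _ = Real.sqrt K * ‖x - y‖ * (1 + X + Y) := Real.sqrt_sq hrhs
end

section
/- For every a ∈ [2,6] there exists C ∈ (0,∞) such that for all x, y ∈ ℝ it holds that 2·(x − y)·(5·x·(1 − |x|) − 5·y·(1 − |y|)) + (a − 1)·(|x|^{3/2} − |y|^{3/2})² ≤ C·(x − y)². -/
lemma rpow_three_halves (t : ℝ) (ht : 0 ≤ t) :
    t ^ ((3 : ℝ) / 2) = Real.sqrt t ^ 3 := by
  rw [show ((3 : ℝ)/2) = (1/2) * ((3:ℕ):ℝ) by norm_num, Real.rpow_mul ht,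
    Real.rpow_natCast, Real.sqrt_eq_rpow]

lemma key (x y : ℝ) :
    (|x| ^ ((3 : ℝ) / 2) - |y| ^ ((3 : ℝ) / 2)) ^ 2 ≤
      2 * (x - y) * (x * |x| - y * |y|) := by
  rw [rpow_three_halves _ (abs_nonneg x), rpow_three_halves _ (abs_nonneg y)]
  set u := Real.sqrt |x| with hu'
  set v := Real.sqrt |y| with hv'
  have hu : 0 ≤ u := Real.sqrt_nonneg _
  have hv : 0 ≤ v := Real.sqrt_nonneg _
  have hx2 : u ^ 2 = |x| := Real.sq_sqrt (abs_nonneg x)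
  have hy2 : v ^ 2 = |y| := Real.sq_sqrt (abs_nonneg y)
  rcases le_total 0 x with hx | hx <;> rcases le_total 0 y with hy | hy
  · have ex : x = u ^ 2 := by rw [hx2, abs_of_nonneg hx]
    have ey : y = v ^ 2 := by rw [hy2, abs_of_nonneg hy]
    rw [ex, ey]
    simp only [abs_of_nonneg (sq_nonneg u), abs_of_nonneg (sq_nonneg v)]
    nlinarith [sq_nonneg (u - v), sq_nonneg (u + v), mul_nonneg hu hv,
      mul_nonneg (mul_nonneg hu hu) (mul_nonneg hu hv),
      mul_nonneg (mul_nonneg hu hv) (mul_nonneg hv hv),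
      mul_nonneg (mul_nonneg (mul_nonneg hu hu) hv) (mul_nonneg hu hv),
      sq_nonneg (u*v), sq_nonneg (u^2 - v^2),
      mul_nonneg (sq_nonneg (u - v)) (mul_nonneg (mul_nonneg hu hu) (mul_nonneg hu hv)),
      mul_nonneg (sq_nonneg (u - v)) (mul_nonneg (mul_nonneg hu hv) (mul_nonneg hv hv)),
      mul_nonneg (sq_nonneg (u - v)) (sq_nonneg (u*v)),
      mul_nonneg (sq_nonneg (u - v)) (sq_nonneg (u^2)),
      mul_nonneg (sq_nonneg (u - v)) (sq_nonneg (v^2))]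
  · have ex : x = u ^ 2 := by rw [hx2, abs_of_nonneg hx]
    have ey : y = -v ^ 2 := by rw [hy2, abs_of_nonpos hy]; ring
    rw [ex, ey]
    simp only [abs_neg, abs_of_nonneg (sq_nonneg u), abs_of_nonneg (sq_nonneg v)]
    nlinarith [mul_nonneg (mul_nonneg (mul_nonneg hu hu) (mul_nonneg hu hv))
        (mul_nonneg hv hv),
      mul_nonneg (mul_nonneg hu hu) (sq_nonneg (u*v)),
      mul_nonneg (mul_nonneg hv hv) (sq_nonneg (u*v))]
  · have ex : x = -u ^ 2 := by rw [hx2, abs_of_nonpos hx]; ring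
    have ey : y = v ^ 2 := by rw [hy2, abs_of_nonneg hy]
    rw [ex, ey]
    simp only [abs_neg, abs_of_nonneg (sq_nonneg u), abs_of_nonneg (sq_nonneg v)]
    nlinarith [mul_nonneg (mul_nonneg (mul_nonneg hu hu) (mul_nonneg hu hv))
        (mul_nonneg hv hv),
      mul_nonneg (mul_nonneg hu hu) (sq_nonneg (u*v)),
      mul_nonneg (mul_nonneg hv hv) (sq_nonneg (u*v))]
  · have ex : x = -u ^ 2 := by rw [hx2, abs_of_nonpos hx]; ring
    have ey : y = -v ^ 2 := by rw [hy2, abs_of_nonpos hy]; ring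
    rw [ex, ey]
    simp only [abs_neg, abs_of_nonneg (sq_nonneg u), abs_of_nonneg (sq_nonneg v)]
    nlinarith [sq_nonneg (u - v), mul_nonneg hu hv,
      mul_nonneg (mul_nonneg (mul_nonneg hu hu) hv) (mul_nonneg hu hv),
      mul_nonneg (sq_nonneg (u - v)) (mul_nonneg (mul_nonneg hu hu) (mul_nonneg hu hv)),
      mul_nonneg (sq_nonneg (u - v)) (mul_nonneg (mul_nonneg hu hv) (mul_nonneg hv hv)),
      mul_nonneg (sq_nonneg (u - v)) (sq_nonneg (u*v)),
      mul_nonneg (sq_nonneg (u - v)) (sq_nonneg (u^2)),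
      mul_nonneg (sq_nonneg (u - v)) (sq_nonneg (v^2))]

/-- Verification of the monotonicity condition (M_a), `a ∈ [2,6]`, for the coefficients
`μ(x) = 5·x·(1 − |x|)` and `σ(x) = |x|^{3/2}` of the Heston-3/2-model SDE. -/
theorem heston_monotonicity (a : ℝ) (ha : a ∈ Set.Icc (2 : ℝ) 6) :
    ∃ C : ℝ, 0 < C ∧ ∀ x y : ℝ,
      2 * (x - y) * (5 * x * (1 - |x|) - 5 * y * (1 - |y|)) +
          (a - 1) * (|x| ^ ((3 : ℝ) / 2) - |y| ^ ((3 : ℝ) / 2)) ^ 2 ≤ C * (x - y) ^ 2 := by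
  refine ⟨10, by norm_num, fun x y => ?_⟩
  have hk := key x y
  have hs : (0:ℝ) ≤ (|x| ^ ((3 : ℝ) / 2) - |y| ^ ((3 : ℝ) / 2)) ^ 2 := sq_nonneg _
  obtain ⟨ha1, ha2⟩ := ha
  nlinarith [hk, hs, sq_nonneg (x - y)]
end
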